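/- For every alternating path P between endpoints s₁ and s₂ (each of which is a row strategy or a column profile), there exists an alternating path P' between the same endpoints with Cost(P') ≤ Cost(P) on which every row strategy appears at most once; consequently, there is a minimum-cost alternating path between s₁ and s₂ of length at most 2m, where m is the number of row-player strategies. -/

import Mathlib

open Finset

/-- Reward needed to incentivize the row player to play `i'` when the columns play `𝒞`. -/
noncomputable def Trow {m n k : ℕ} [NeZero m] (R : Fin m → Fin n → ℝ)
    (𝒞 : Fin k → Fin n) (i' : Fin m) : ℝ :=
  (univ.sup' univ_nonempty fun i => ∑ j, R i (𝒞 j)) - ∑ j, R i' (𝒞 j)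

/-- Reward needed to incentivize the column players to play `𝒞'` when the row plays `i`. -/
noncomputable def Tcol {m n k : ℕ} [NeZero n] (C : Fin m → Fin n → ℝ)
    (i : Fin m) (𝒞' : Fin k → Fin n) : ℝ :=
  k * (univ.sup' univ_nonempty fun q => C i q) - ∑ j, C i (𝒞' j)

/-- A vertex of an alternating path: a row strategy or a column profile. -/
abbrev AltVert (m n k : ℕ) := Fin m ⊕ (Fin k → Fin n)

/-- Weight of a step of an alternating path. -/
noncomputable def altWeight {m n k : ℕ} [NeZero m] [NeZero n] (R C : Fin m → Fin n → ℝ) :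
    AltVert m n k → AltVert m n k → ℝ
  | Sum.inl r, Sum.inr c => Tcol C r c
  | Sum.inr c, Sum.inl r => Trow R c r
  | _, _ => 0

/-- `v 0, v 1, …, v L` is an alternating path: row strategies and column profiles alternate. -/
def IsAlt {m n k : ℕ} (v : ℕ → AltVert m n k) (L : ℕ) : Prop :=
  ∀ t < L, (v t).isLeft ≠ (v (t+1)).isLeft

/-- Cost of the alternating path `v 0, v 1, …, v L`. -/
noncomputable def altCost {m n k : ℕ} [NeZero m] [NeZero n] (R C : Fin m → Fin n → ℝ)
    (v : ℕ → AltVert m n k) (L : ℕ) : ℝ :=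
  ∑ t ∈ Finset.range L, altWeight R C (v t) (v (t+1))

section Aux

set_option linter.unusedSectionVars false

variable {m n k : ℕ} [NeZero m] [NeZero n] (R C : Fin m → Fin n → ℝ)

lemma Trow_nonneg (𝒞 : Fin k → Fin n) (i' : Fin m) : 0 ≤ Trow R 𝒞 i' := by
  have := Finset.le_sup' (fun i => ∑ j, R i (𝒞 j)) (Finset.mem_univ i')
  simp only [Trow, sub_nonneg]
  exact this

lemma Tcol_nonneg (i : Fin m) (𝒞' : Fin k → Fin n) : 0 ≤ Tcol C i 𝒞' := by
  have h : ∑ j : Fin k, C i (𝒞' j) ≤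
      ∑ _j : Fin k, (univ.sup' univ_nonempty fun q => C i q) :=
    Finset.sum_le_sum fun j _ => Finset.le_sup' _ (Finset.mem_univ (𝒞' j))
  simp only [Tcol, sub_nonneg]
  calc ∑ j : Fin k, C i (𝒞' j)
      ≤ ∑ _j : Fin k, (univ.sup' univ_nonempty fun q => C i q) := h
    _ = k * (univ.sup' univ_nonempty fun q => C i q) := by
        rw [Finset.sum_const, Finset.card_univ, Fintype.card_fin, nsmul_eq_mul]

lemma altWeight_nonneg (a b : AltVert m n k) : 0 ≤ altWeight R C a b := by
  cases a <;> cases b <;>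
    simp [altWeight, Trow_nonneg, Tcol_nonneg, le_refl]

lemma part1 (L : ℕ) : ∀ v : ℕ → AltVert m n k, IsAlt v L →
    ∃ (L' : ℕ) (v' : ℕ → AltVert m n k),
      IsAlt v' L' ∧ v' 0 = v 0 ∧ v' L' = v L ∧
      altCost R C v' L' ≤ altCost R C v L ∧
      (∀ t ≤ L', ∀ t' ≤ L', ∀ i : Fin m, v' t = Sum.inl i → v' t' = Sum.inl i → t = t') := by
  induction L using Nat.strong_induction_on with
  | _ L IH =>
  intro v hv
  by_cases hdis : ∀ t ≤ L, ∀ t' ≤ L, ∀ i : Fin m, v t = Sum.inl i → v t' = Sum.inl i → t = t'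
  · exact ⟨L, v, hv, rfl, rfl, le_refl _, hdis⟩
  push_neg at hdis
  obtain ⟨t, ht, t', ht', i, hvt, hvt', htt⟩ := hdis
  wlog hlt : t < t' generalizing t t'
  · exact this t' ht' t ht hvt' hvt (Ne.symm htt) (by omega)
  set d := t' - t with hd
  have hdpos : 0 < d := by omega
  have htd : t + d = t' := by omega
  set Lw := L - d with hLw
  have hLwd : Lw + d = L := by omega
  have hLwt : t ≤ Lw := by omega
  have hLwlt : Lw < L := by omega
  set w : ℕ → AltVert m n k := fun s => if s ≤ t then v s else v (s + d) with hw
  have hwt : ∀ s ≤ t, w s = v s := fun s hs => if_pos hs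
  have hwgt : ∀ s, t < s → w s = v (s + d) := fun s hs => if_neg (by omega)
  have hw0 : w 0 = v 0 := hwt 0 (Nat.zero_le t)
  have hwL : w Lw = v L := by
    rcases eq_or_lt_of_le hLwt with h1 | h1
    · have hT' : t' = L := by omega
      rw [hwt Lw h1.ge, ← h1, hvt, ← hT', hvt']
    · rw [hwgt Lw h1, hLwd]
  have hwalt : IsAlt w Lw := by
    intro s hs
    rcases lt_trichotomy s t with h1 | h1 | h1
    · rw [hwt s (by omega), hwt (s+1) (by omega)]
      exact hv s (by omega)
    · subst h1
      rw [hwt s le_rfl, hwgt (s+1) (by omega)]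
      have heq : (v s).isLeft = (v t').isLeft := by rw [hvt, hvt']
      have : s + 1 + d = t' + 1 := by omega
      rw [heq, this]
      exact hv t' (by omega)
    · rw [hwgt s h1, hwgt (s+1) (by omega)]
      have : s + 1 + d = s + d + 1 := by omega
      rw [this]
      exact hv (s + d) (by omega)
  have hcost : altCost R C w Lw ≤ altCost R C v L := by
    have hsplitw : altCost R C w Lw =
        (∑ s ∈ Finset.Ico 0 t, altWeight R C (v s) (v (s+1))) +
        ∑ s ∈ Finset.Ico t Lw, altWeight R C (v (s+d)) (v (s+d+1)) := by
      rw [altCost, Finset.range_eq_Ico,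
        ← Finset.sum_Ico_consecutive _ (Nat.zero_le t) hLwt]
      congr 1
      · refine Finset.sum_congr rfl fun s hs => ?_
        rw [Finset.mem_Ico] at hs
        rw [hwt s (by omega), hwt (s+1) (by omega)]
      · refine Finset.sum_congr rfl fun s hs => ?_
        rw [Finset.mem_Ico] at hs
        rcases eq_or_lt_of_le hs.1 with h1 | h1
        · rw [← h1]
          rw [hwt t le_rfl, hwgt (t+1) (by omega)]
          have h2 : t + 1 + d = t + d + 1 := by omega
          have h3 : v t = v (t + d) := by rw [htd, hvt, hvt']
          rw [h2, h3]
        · rw [hwgt s h1, hwgt (s+1) (by omega)]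
          have : s + 1 + d = s + d + 1 := by omega
          rw [this]
    have hsplitv : altCost R C v L =
        ((∑ s ∈ Finset.Ico 0 t, altWeight R C (v s) (v (s+1))) +
         ∑ s ∈ Finset.Ico t t', altWeight R C (v s) (v (s+1))) +
        ∑ s ∈ Finset.Ico t' L, altWeight R C (v s) (v (s+1)) := by
      rw [altCost, Finset.range_eq_Ico,
        Finset.sum_Ico_consecutive _ (Nat.zero_le t) (by omega : t ≤ t'),
        Finset.sum_Ico_consecutive _ (by omega : (0:ℕ) ≤ t') (by omega : t' ≤ L)]
    have hshift : ∑ s ∈ Finset.Ico t Lw, altWeight R C (v (s+d)) (v (s+d+1)) =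
        ∑ s ∈ Finset.Ico t' L, altWeight R C (v s) (v (s+1)) := by
      have := Finset.sum_Ico_add' (fun u => altWeight R C (v u) (v (u+1))) t Lw d
      rw [this, htd, hLwd]
    rw [hsplitw, hsplitv, hshift]
    have : 0 ≤ ∑ s ∈ Finset.Ico t t', altWeight R C (v s) (v (s+1)) :=
      Finset.sum_nonneg fun s _ => altWeight_nonneg R C _ _
    linarith
  obtain ⟨L', v', h1, h2, h3, h4, h5⟩ := IH Lw hLwlt w hwalt
  exact ⟨L', v', h1, h2.trans hw0, h3.trans hwL, h4.trans hcost, h5⟩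

lemma length_bound (L : ℕ) (v : ℕ → AltVert m n k) (hv : IsAlt v L)
    (hd : ∀ t ≤ L, ∀ t' ≤ L, ∀ i : Fin m, v t = Sum.inl i → v t' = Sum.inl i → t = t') :
    L ≤ 2 * m := by
  by_contra hcon
  push_neg at hcon
  have hm : 1 ≤ m := Nat.one_le_iff_ne_zero.mpr (NeZero.ne m)
  have hstep2 : ∀ t, t + 2 ≤ L → (v t).isLeft = (v (t+2)).isLeft := by
    intro t htL
    have h1 := hv t (by omega)
    have h2 := hv (t+1) (by omega)
    have : t + 1 + 1 = t + 2 := by omega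
    rw [this] at h2
    revert h1 h2
    cases (v t).isLeft <;> cases (v (t+1)).isLeft <;> cases (v (t+2)).isLeft <;> simp
  obtain ⟨t₀, ht₀1, ht₀L⟩ : ∃ t₀, t₀ ≤ 1 ∧ (v t₀).isLeft = true := by
    cases hvl : (v 0).isLeft with
    | true => exact ⟨0, by omega, hvl⟩
    | false =>
      refine ⟨1, le_rfl, ?_⟩
      have := hv 0 (by omega)
      rw [hvl] at this
      simpa using this.symm
  have hpar : ∀ j, t₀ + 2*j ≤ L → (v (t₀ + 2*j)).isLeft = true := by
    intro j
    induction j with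
    | zero => intro _; simpa using ht₀L
    | succ j ih =>
      intro hle
      have h2 : t₀ + 2*j + 2 ≤ L := by omega
      have : t₀ + 2*(j+1) = (t₀ + 2*j) + 2 := by ring
      rw [this, ← hstep2 _ h2]
      exact ih (by omega)
  have hleft : ∀ j : Fin (m+1), ((v (t₀ + 2*(j:ℕ))).isLeft : Bool) = true := by
    intro j
    have hj := j.isLt
    exact hpar j (by omega)
  let f : Fin (m+1) → Fin m := fun j => (v (t₀ + 2*(j:ℕ))).getLeft (hleft j)
  have hf : ∀ j : Fin (m+1), v (t₀ + 2*(j:ℕ)) = Sum.inl (f j) := fun j =>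
    Sum.eq_left_iff_getLeft_eq.mpr ⟨hleft j, rfl⟩
  have hinj : Function.Injective f := by
    intro j j' hjj
    have hj := j.isLt
    have hj' := j'.isLt
    have := hd (t₀ + 2*(j:ℕ)) (by omega) (t₀ + 2*(j':ℕ)) (by omega) (f j) (hf j)
      (by rw [hf j', hjj])
    have : (j:ℕ) = (j':ℕ) := by omega
    exact Fin.ext this
  have := Fintype.card_le_of_injective f hinj
  simp only [Fintype.card_fin] at this
  omega

end Aux

/-- Every alternating path can be replaced, keeping its endpoints and without increasing its
cost, by one on which every row strategy appears at most once; consequently, between any two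
endpoints there is a minimum-cost alternating path of length at most `2m`. -/
theorem alternating_path_row_strategies_distinct_and_min_length
    (m n k : ℕ) [NeZero m] [NeZero n]
    (R C : Fin m → Fin n → ℝ) :
    (∀ (L : ℕ) (v : ℕ → AltVert m n k), IsAlt v L →
      ∃ (L' : ℕ) (v' : ℕ → AltVert m n k),
        IsAlt v' L' ∧ v' 0 = v 0 ∧ v' L' = v L ∧
        altCost R C v' L' ≤ altCost R C v L ∧
        (∀ t ≤ L', ∀ t' ≤ L', ∀ i : Fin m, v' t = Sum.inl i → v' t' = Sum.inl i → t = t')) ∧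
    (∀ s₁ s₂ : AltVert m n k,
      (∃ (L : ℕ) (v : ℕ → AltVert m n k), IsAlt v L ∧ v 0 = s₁ ∧ v L = s₂) →
      ∃ (L : ℕ) (v : ℕ → AltVert m n k),
        IsAlt v L ∧ v 0 = s₁ ∧ v L = s₂ ∧ L ≤ 2 * m ∧
        IsLeast {x | ∃ (L' : ℕ) (v' : ℕ → AltVert m n k),
            IsAlt v' L' ∧ v' 0 = s₁ ∧ v' L' = s₂ ∧ x = altCost R C v' L'}
          (altCost R C v L)) := by
  constructor
  · exact fun L v hv => part1 R C L v hv
  · rintro s₁ s₂ ⟨L₀, v₀, hv₀, h00, h0L⟩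
    classical
    haveI : NeZero (2*m+1) := ⟨by omega⟩
    set T : Set ℝ := {x | ∃ L, L ≤ 2*m ∧ ∃ v : ℕ → AltVert m n k,
      IsAlt v L ∧ v 0 = s₁ ∧ v L = s₂ ∧ x = altCost R C v L} with hT
    have hshort : ∀ (L : ℕ) (v : ℕ → AltVert m n k), IsAlt v L → v 0 = s₁ → v L = s₂ →
        ∃ y ∈ T, y ≤ altCost R C v L := by
      intro L v hv hv0 hvL
      obtain ⟨L', v', halt, he0, heL, hc, hdist⟩ := part1 R C L v hv
      exact ⟨altCost R C v' L',
        ⟨L', length_bound L' v' halt hdist, v', halt, he0.trans hv0, heL.trans hvL, rfl⟩, hc⟩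
    have hTne : T.Nonempty := by
      obtain ⟨y, hy, _⟩ := hshort L₀ v₀ hv₀ h00 h0L
      exact ⟨y, hy⟩
    have hTfin : T.Finite := by
      apply Set.Finite.subset (Set.finite_range
        (fun p : Fin (2*m+1) × (Fin (2*m+1) → AltVert m n k) =>
          altCost R C (fun s => p.2 (Fin.ofNat (2*m+1) s)) (p.1 : ℕ)))
      rintro x ⟨L, hL2m, v, hv, hv0, hvL, rfl⟩
      refine ⟨(⟨L, by omega⟩, fun j => v (j : ℕ)), ?_⟩
      simp only [altCost]
      refine Finset.sum_congr rfl fun s hs => ?_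
      rw [Finset.mem_range] at hs
      have h1 : ((Fin.ofNat (2*m+1) s : Fin (2*m+1)) : ℕ) = s := by
        rw [Fin.val_ofNat]; exact Nat.mod_eq_of_lt (by omega)
      have h2 : ((Fin.ofNat (2*m+1) (s+1) : Fin (2*m+1)) : ℕ) = s + 1 := by
        rw [Fin.val_ofNat]; exact Nat.mod_eq_of_lt (by omega)
      rw [h1, h2]
    set F : Finset ℝ := hTfin.toFinset with hF
    have hFne : F.Nonempty := by
      rwa [hF, Set.Finite.toFinset_nonempty]
    have hmin_mem : F.min' hFne ∈ T :=
      hTfin.mem_toFinset.mp (F.min'_mem hFne)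
    obtain ⟨Ls, hLs2m, vs, hvs, hvs0, hvsL, hxeq⟩ := hmin_mem
    refine ⟨Ls, vs, hvs, hvs0, hvsL, hLs2m, ?_, ?_⟩
    · exact ⟨Ls, vs, hvs, hvs0, hvsL, rfl⟩
    · rintro x ⟨L', v', hv', h0', hL', rfl⟩
      obtain ⟨y, hyT, hyle⟩ := hshort L' v' hv' h0' hL'
      have : F.min' hFne ≤ y := F.min'_le y (hTfin.mem_toFinset.mpr hyT)
      rw [hxeq] at this
      linarith
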